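/- There exists a 6-element subset A of the finite abelian group (ℤ/8ℤ)^3 that is spectral in (ℤ/8ℤ)^3 but does not tile (ℤ/8ℤ)^3 by translation. (In particular, no 6-element subset of (ℤ/8ℤ)^3 can tile it, since 6 does not divide 512 = |(ℤ/8ℤ)^3|.) -/

import Mathlib

/-- A finite subset `A` of an abelian group `G` is spectral if there is a set `Λ` of
characters of `G` with `|Λ| = |A|` such that any two distinct characters of `Λ` are
orthogonal when restricted to `A`. -/
def IsSpectral {G : Type*} [AddCommGroup G] (A : Finset G) : Prop :=
  ∃ Λ : Finset (AddChar G ℂ), Λ.card = A.card ∧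
    ∀ χ ∈ Λ, ∀ ψ ∈ Λ, χ ≠ ψ → ∑ a ∈ A, χ a * (starRingEnd ℂ) (ψ a) = 0

/-- A finite subset `A` of an abelian group `G` tiles `G` by translation if there is a
set `T ⊆ G` such that every element of `G` is uniquely `a + t` with `a ∈ A`, `t ∈ T`. -/
def Tiles {G : Type*} [AddCommGroup G] (A : Finset G) : Prop :=
  ∃ T : Finset G, ∀ g : G, ∃! p : G × G, p.1 ∈ A ∧ p.2 ∈ T ∧ p.1 + p.2 = g

noncomputable def zt : ℂ := Complex.exp (2 * Real.pi * Complex.I / 8)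

lemma ztprim : IsPrimitiveRoot zt 8 := by
  have := Complex.isPrimitiveRoot_exp 8 (by norm_num)
  simpa [zt] using this

lemma zt8 : zt ^ 8 = 1 := ztprim.pow_eq_one

lemma zt4 : zt ^ 4 = -1 := by
  rw [zt, ← Complex.exp_nat_mul,
    show ((4 : ℕ) : ℂ) * (2 * Real.pi * Complex.I / 8) = Real.pi * Complex.I by push_cast; ring,
    Complex.exp_pi_mul_I]

lemma ztconj : (starRingEnd ℂ) zt = zt ^ 7 := by
  have habs : ‖zt‖ = 1 := Complex.norm_eq_one_of_pow_eq_one zt8 (by norm_num)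
  have h7 : zt ^ 7 * zt = 1 := by rw [← pow_succ, zt8]
  rw [← Complex.inv_eq_conj habs]
  exact (eq_inv_of_mul_eq_one_left h7).symm

def dotHom (b : Fin 3 → ZMod 8) : (Fin 3 → ZMod 8) →+ ZMod 8 where
  toFun a := ∑ i, b i * a i
  map_zero' := by simp
  map_add' x y := by simp [mul_add, Finset.sum_add_distrib]

noncomputable def chi (b : Fin 3 → ZMod 8) : AddChar (Fin 3 → ZMod 8) ℂ :=
  (AddChar.zmodChar 8 zt8).compAddMonoidHom (dotHom b)

lemma chi_apply (b a : Fin 3 → ZMod 8) : chi b a = zt ^ (∑ i, b i * a i).val := rfl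

lemma chi_inj : Function.Injective chi := by
  intro b b' h
  funext c
  have hval : ∀ a : Fin 3 → ZMod 8, (∑ i, b i * a i).val = (∑ i, b' i * a i).val := by
    intro a
    refine ztprim.pow_inj (ZMod.val_lt _) (ZMod.val_lt _) ?_
    have := DFunLike.congr_fun h a
    rwa [chi_apply, chi_apply] at this
  apply ZMod.val_injective
  have key := hval (fun i => if i = c then 1 else 0)
  fin_cases c <;> simpa [Fin.sum_univ_three] using key

def vA : Fin 6 → (Fin 3 → ZMod 8) :=
  ![![0,0,0], ![5,2,5], ![5,0,4], ![2,1,4], ![0,2,5], ![5,5,7]]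

def vB : Fin 6 → (Fin 3 → ZMod 8) :=
  ![![0,0,0], ![1,0,1], ![2,7,6], ![4,7,4], ![5,6,1], ![6,6,2]]

lemma vA_inj : Function.Injective vA := by decide

lemma vB_inj : Function.Injective vB := by decide

lemma ev_0_0 : chi (vB 0) (vA 0) = zt ^ (0 : ℕ) := by
  rw [chi_apply, show (∑ c, vB 0 c * vA 0 c).val = 0 from by decide]

lemma ev_0_1 : chi (vB 0) (vA 1) = zt ^ (0 : ℕ) := by
  rw [chi_apply, show (∑ c, vB 0 c * vA 1 c).val = 0 from by decide]

lemma ev_0_2 : chi (vB 0) (vA 2) = zt ^ (0 : ℕ) := by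
  rw [chi_apply, show (∑ c, vB 0 c * vA 2 c).val = 0 from by decide]

lemma ev_0_3 : chi (vB 0) (vA 3) = zt ^ (0 : ℕ) := by
  rw [chi_apply, show (∑ c, vB 0 c * vA 3 c).val = 0 from by decide]

lemma ev_0_4 : chi (vB 0) (vA 4) = zt ^ (0 : ℕ) := by
  rw [chi_apply, show (∑ c, vB 0 c * vA 4 c).val = 0 from by decide]

lemma ev_0_5 : chi (vB 0) (vA 5) = zt ^ (0 : ℕ) := by
  rw [chi_apply, show (∑ c, vB 0 c * vA 5 c).val = 0 from by decide]

lemma ev_1_0 : chi (vB 1) (vA 0) = zt ^ (0 : ℕ) := by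
  rw [chi_apply, show (∑ c, vB 1 c * vA 0 c).val = 0 from by decide]

lemma ev_1_1 : chi (vB 1) (vA 1) = zt ^ (2 : ℕ) := by
  rw [chi_apply, show (∑ c, vB 1 c * vA 1 c).val = 2 from by decide]

lemma ev_1_2 : chi (vB 1) (vA 2) = zt ^ (1 : ℕ) := by
  rw [chi_apply, show (∑ c, vB 1 c * vA 2 c).val = 1 from by decide]

lemma ev_1_3 : chi (vB 1) (vA 3) = zt ^ (6 : ℕ) := by
  rw [chi_apply, show (∑ c, vB 1 c * vA 3 c).val = 6 from by decide]

lemma ev_1_4 : chi (vB 1) (vA 4) = zt ^ (5 : ℕ) := by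
  rw [chi_apply, show (∑ c, vB 1 c * vA 4 c).val = 5 from by decide]

lemma ev_1_5 : chi (vB 1) (vA 5) = zt ^ (4 : ℕ) := by
  rw [chi_apply, show (∑ c, vB 1 c * vA 5 c).val = 4 from by decide]

lemma ev_2_0 : chi (vB 2) (vA 0) = zt ^ (0 : ℕ) := by
  rw [chi_apply, show (∑ c, vB 2 c * vA 0 c).val = 0 from by decide]

lemma ev_2_1 : chi (vB 2) (vA 1) = zt ^ (6 : ℕ) := by
  rw [chi_apply, show (∑ c, vB 2 c * vA 1 c).val = 6 from by decide]

lemma ev_2_2 : chi (vB 2) (vA 2) = zt ^ (2 : ℕ) := by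
  rw [chi_apply, show (∑ c, vB 2 c * vA 2 c).val = 2 from by decide]

lemma ev_2_3 : chi (vB 2) (vA 3) = zt ^ (3 : ℕ) := by
  rw [chi_apply, show (∑ c, vB 2 c * vA 3 c).val = 3 from by decide]

lemma ev_2_4 : chi (vB 2) (vA 4) = zt ^ (4 : ℕ) := by
  rw [chi_apply, show (∑ c, vB 2 c * vA 4 c).val = 4 from by decide]

lemma ev_2_5 : chi (vB 2) (vA 5) = zt ^ (7 : ℕ) := by
  rw [chi_apply, show (∑ c, vB 2 c * vA 5 c).val = 7 from by decide]

lemma ev_3_0 : chi (vB 3) (vA 0) = zt ^ (0 : ℕ) := by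
  rw [chi_apply, show (∑ c, vB 3 c * vA 0 c).val = 0 from by decide]

lemma ev_3_1 : chi (vB 3) (vA 1) = zt ^ (6 : ℕ) := by
  rw [chi_apply, show (∑ c, vB 3 c * vA 1 c).val = 6 from by decide]

lemma ev_3_2 : chi (vB 3) (vA 2) = zt ^ (4 : ℕ) := by
  rw [chi_apply, show (∑ c, vB 3 c * vA 2 c).val = 4 from by decide]

lemma ev_3_3 : chi (vB 3) (vA 3) = zt ^ (7 : ℕ) := by
  rw [chi_apply, show (∑ c, vB 3 c * vA 3 c).val = 7 from by decide]

lemma ev_3_4 : chi (vB 3) (vA 4) = zt ^ (2 : ℕ) := by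
  rw [chi_apply, show (∑ c, vB 3 c * vA 4 c).val = 2 from by decide]

lemma ev_3_5 : chi (vB 3) (vA 5) = zt ^ (3 : ℕ) := by
  rw [chi_apply, show (∑ c, vB 3 c * vA 5 c).val = 3 from by decide]

lemma ev_4_0 : chi (vB 4) (vA 0) = zt ^ (0 : ℕ) := by
  rw [chi_apply, show (∑ c, vB 4 c * vA 0 c).val = 0 from by decide]

lemma ev_4_1 : chi (vB 4) (vA 1) = zt ^ (2 : ℕ) := by
  rw [chi_apply, show (∑ c, vB 4 c * vA 1 c).val = 2 from by decide]

lemma ev_4_2 : chi (vB 4) (vA 2) = zt ^ (5 : ℕ) := by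
  rw [chi_apply, show (∑ c, vB 4 c * vA 2 c).val = 5 from by decide]

lemma ev_4_3 : chi (vB 4) (vA 3) = zt ^ (4 : ℕ) := by
  rw [chi_apply, show (∑ c, vB 4 c * vA 3 c).val = 4 from by decide]

lemma ev_4_4 : chi (vB 4) (vA 4) = zt ^ (1 : ℕ) := by
  rw [chi_apply, show (∑ c, vB 4 c * vA 4 c).val = 1 from by decide]

lemma ev_4_5 : chi (vB 4) (vA 5) = zt ^ (6 : ℕ) := by
  rw [chi_apply, show (∑ c, vB 4 c * vA 5 c).val = 6 from by decide]

lemma ev_5_0 : chi (vB 5) (vA 0) = zt ^ (0 : ℕ) := by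
  rw [chi_apply, show (∑ c, vB 5 c * vA 0 c).val = 0 from by decide]

lemma ev_5_1 : chi (vB 5) (vA 1) = zt ^ (4 : ℕ) := by
  rw [chi_apply, show (∑ c, vB 5 c * vA 1 c).val = 4 from by decide]

lemma ev_5_2 : chi (vB 5) (vA 2) = zt ^ (6 : ℕ) := by
  rw [chi_apply, show (∑ c, vB 5 c * vA 2 c).val = 6 from by decide]

lemma ev_5_3 : chi (vB 5) (vA 3) = zt ^ (2 : ℕ) := by
  rw [chi_apply, show (∑ c, vB 5 c * vA 3 c).val = 2 from by decide]

lemma ev_5_4 : chi (vB 5) (vA 4) = zt ^ (6 : ℕ) := by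
  rw [chi_apply, show (∑ c, vB 5 c * vA 4 c).val = 6 from by decide]

lemma ev_5_5 : chi (vB 5) (vA 5) = zt ^ (2 : ℕ) := by
  rw [chi_apply, show (∑ c, vB 5 c * vA 5 c).val = 2 from by decide]

lemma ortho_0_1 : ∑ k : Fin 6, chi (vB 0) (vA k) * (starRingEnd ℂ) (chi (vB 1) (vA k)) = 0 := by
  simp only [Fin.sum_univ_six, ev_0_0, ev_0_1, ev_0_2, ev_0_3, ev_0_4, ev_0_5, ev_1_0, ev_1_1, ev_1_2, ev_1_3, ev_1_4, ev_1_5, map_pow, ztconj]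
  linear_combination ((1 : ℂ) + (-1 : ℂ) * zt ^ 4 + (1 : ℂ) * zt ^ 7 + (1 : ℂ) * zt ^ 8 + (-1 : ℂ) * zt ^ 11 + (-1 : ℂ) * zt ^ 12 + (1 : ℂ) * zt ^ 14 + (1 : ℂ) * zt ^ 15 + (1 : ℂ) * zt ^ 16 + (-1 : ℂ) * zt ^ 18 + (-1 : ℂ) * zt ^ 19 + (-1 : ℂ) * zt ^ 20 + (1 : ℂ) * zt ^ 22 + (1 : ℂ) * zt ^ 23 + (1 : ℂ) * zt ^ 24 + (-1 : ℂ) * zt ^ 26 + (-1 : ℂ) * zt ^ 27 + (1 : ℂ) * zt ^ 30 + (1 : ℂ) * zt ^ 31 + (-1 : ℂ) * zt ^ 34 + (1 : ℂ) * zt ^ 38) * zt4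

lemma ortho_0_2 : ∑ k : Fin 6, chi (vB 0) (vA k) * (starRingEnd ℂ) (chi (vB 2) (vA k)) = 0 := by
  simp only [Fin.sum_univ_six, ev_0_0, ev_0_1, ev_0_2, ev_0_3, ev_0_4, ev_0_5, ev_2_0, ev_2_1, ev_2_2, ev_2_3, ev_2_4, ev_2_5, map_pow, ztconj]
  linear_combination ((1 : ℂ) + (-1 : ℂ) * zt ^ 4 + (1 : ℂ) * zt ^ 8 + (-1 : ℂ) * zt ^ 12 + (1 : ℂ) * zt ^ 14 + (1 : ℂ) * zt ^ 16 + (-1 : ℂ) * zt ^ 18 + (-1 : ℂ) * zt ^ 20 + (1 : ℂ) * zt ^ 21 + (1 : ℂ) * zt ^ 22 + (1 : ℂ) * zt ^ 24 + (-1 : ℂ) * zt ^ 25 + (-1 : ℂ) * zt ^ 26 + (1 : ℂ) * zt ^ 29 + (1 : ℂ) * zt ^ 30 + (-1 : ℂ) * zt ^ 33 + (-1 : ℂ) * zt ^ 34 + (1 : ℂ) * zt ^ 37 + (1 : ℂ) * zt ^ 38 + (-1 : ℂ) * zt ^ 41 + (1 : ℂ) * zt ^ 45) * zt4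

lemma ortho_0_3 : ∑ k : Fin 6, chi (vB 0) (vA k) * (starRingEnd ℂ) (chi (vB 3) (vA k)) = 0 := by
  simp only [Fin.sum_univ_six, ev_0_0, ev_0_1, ev_0_2, ev_0_3, ev_0_4, ev_0_5, ev_3_0, ev_3_1, ev_3_2, ev_3_3, ev_3_4, ev_3_5, map_pow, ztconj]
  linear_combination ((1 : ℂ) + (-1 : ℂ) * zt ^ 4 + (1 : ℂ) * zt ^ 8 + (-1 : ℂ) * zt ^ 12 + (1 : ℂ) * zt ^ 14 + (1 : ℂ) * zt ^ 16 + (-1 : ℂ) * zt ^ 18 + (-1 : ℂ) * zt ^ 20 + (1 : ℂ) * zt ^ 21 + (1 : ℂ) * zt ^ 22 + (1 : ℂ) * zt ^ 24 + (-1 : ℂ) * zt ^ 25 + (-1 : ℂ) * zt ^ 26 + (1 : ℂ) * zt ^ 29 + (1 : ℂ) * zt ^ 30 + (-1 : ℂ) * zt ^ 33 + (-1 : ℂ) * zt ^ 34 + (1 : ℂ) * zt ^ 37 + (1 : ℂ) * zt ^ 38 + (-1 : ℂ) * zt ^ 41 + (1 : ℂ) * zt ^ 45) * zt4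

lemma ortho_0_4 : ∑ k : Fin 6, chi (vB 0) (vA k) * (starRingEnd ℂ) (chi (vB 4) (vA k)) = 0 := by
  simp only [Fin.sum_univ_six, ev_0_0, ev_0_1, ev_0_2, ev_0_3, ev_0_4, ev_0_5, ev_4_0, ev_4_1, ev_4_2, ev_4_3, ev_4_4, ev_4_5, map_pow, ztconj]
  linear_combination ((1 : ℂ) + (-1 : ℂ) * zt ^ 4 + (1 : ℂ) * zt ^ 7 + (1 : ℂ) * zt ^ 8 + (-1 : ℂ) * zt ^ 11 + (-1 : ℂ) * zt ^ 12 + (1 : ℂ) * zt ^ 14 + (1 : ℂ) * zt ^ 15 + (1 : ℂ) * zt ^ 16 + (-1 : ℂ) * zt ^ 18 + (-1 : ℂ) * zt ^ 19 + (-1 : ℂ) * zt ^ 20 + (1 : ℂ) * zt ^ 22 + (1 : ℂ) * zt ^ 23 + (1 : ℂ) * zt ^ 24 + (-1 : ℂ) * zt ^ 26 + (-1 : ℂ) * zt ^ 27 + (1 : ℂ) * zt ^ 30 + (1 : ℂ) * zt ^ 31 + (-1 : ℂ) * zt ^ 34 + (1 : ℂ) * zt ^ 38) * zt4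

lemma ortho_0_5 : ∑ k : Fin 6, chi (vB 0) (vA k) * (starRingEnd ℂ) (chi (vB 5) (vA k)) = 0 := by
  simp only [Fin.sum_univ_six, ev_0_0, ev_0_1, ev_0_2, ev_0_3, ev_0_4, ev_0_5, ev_5_0, ev_5_1, ev_5_2, ev_5_3, ev_5_4, ev_5_5, map_pow, ztconj]
  linear_combination ((1 : ℂ) + (-1 : ℂ) * zt ^ 4 + (1 : ℂ) * zt ^ 8 + (-1 : ℂ) * zt ^ 12 + (2 : ℂ) * zt ^ 14 + (1 : ℂ) * zt ^ 16 + (-2 : ℂ) * zt ^ 18 + (-1 : ℂ) * zt ^ 20 + (2 : ℂ) * zt ^ 22 + (1 : ℂ) * zt ^ 24 + (-2 : ℂ) * zt ^ 26 + (2 : ℂ) * zt ^ 30 + (-2 : ℂ) * zt ^ 34 + (2 : ℂ) * zt ^ 38) * zt4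

lemma ortho_1_0 : ∑ k : Fin 6, chi (vB 1) (vA k) * (starRingEnd ℂ) (chi (vB 0) (vA k)) = 0 := by
  simp only [Fin.sum_univ_six, ev_1_0, ev_1_1, ev_1_2, ev_1_3, ev_1_4, ev_1_5, ev_0_0, ev_0_1, ev_0_2, ev_0_3, ev_0_4, ev_0_5, map_pow, ztconj]
  linear_combination ((1 : ℂ) + (1 : ℂ) * zt ^ 1 + (1 : ℂ) * zt ^ 2) * zt4

lemma ortho_1_2 : ∑ k : Fin 6, chi (vB 1) (vA k) * (starRingEnd ℂ) (chi (vB 2) (vA k)) = 0 := by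
  simp only [Fin.sum_univ_six, ev_1_0, ev_1_1, ev_1_2, ev_1_3, ev_1_4, ev_1_5, ev_2_0, ev_2_1, ev_2_2, ev_2_3, ev_2_4, ev_2_5, map_pow, ztconj]
  linear_combination ((1 : ℂ) + (-1 : ℂ) * zt ^ 4 + (1 : ℂ) * zt ^ 8 + (-1 : ℂ) * zt ^ 12 + (1 : ℂ) * zt ^ 15 + (1 : ℂ) * zt ^ 16 + (-1 : ℂ) * zt ^ 19 + (-1 : ℂ) * zt ^ 20 + (1 : ℂ) * zt ^ 23 + (1 : ℂ) * zt ^ 24 + (-1 : ℂ) * zt ^ 28 + (1 : ℂ) * zt ^ 32 + (1 : ℂ) * zt ^ 33 + (-1 : ℂ) * zt ^ 36 + (-1 : ℂ) * zt ^ 37 + (1 : ℂ) * zt ^ 40 + (1 : ℂ) * zt ^ 41 + (-1 : ℂ) * zt ^ 45 + (1 : ℂ) * zt ^ 49) * zt4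

lemma ortho_1_3 : ∑ k : Fin 6, chi (vB 1) (vA k) * (starRingEnd ℂ) (chi (vB 3) (vA k)) = 0 := by
  simp only [Fin.sum_univ_six, ev_1_0, ev_1_1, ev_1_2, ev_1_3, ev_1_4, ev_1_5, ev_3_0, ev_3_1, ev_3_2, ev_3_3, ev_3_4, ev_3_5, map_pow, ztconj]
  linear_combination ((1 : ℂ) + (-1 : ℂ) * zt ^ 4 + (1 : ℂ) * zt ^ 8 + (-1 : ℂ) * zt ^ 12 + (1 : ℂ) * zt ^ 16 + (1 : ℂ) * zt ^ 19 + (-1 : ℂ) * zt ^ 20 + (-1 : ℂ) * zt ^ 23 + (1 : ℂ) * zt ^ 24 + (1 : ℂ) * zt ^ 25 + (1 : ℂ) * zt ^ 27 + (-1 : ℂ) * zt ^ 28 + (-1 : ℂ) * zt ^ 31 + (1 : ℂ) * zt ^ 32 + (1 : ℂ) * zt ^ 35 + (-1 : ℂ) * zt ^ 36 + (-1 : ℂ) * zt ^ 39 + (1 : ℂ) * zt ^ 40 + (1 : ℂ) * zt ^ 43 + (-1 : ℂ) * zt ^ 47 + (1 : ℂ) * zt ^ 51) * zt4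

lemma ortho_1_4 : ∑ k : Fin 6, chi (vB 1) (vA k) * (starRingEnd ℂ) (chi (vB 4) (vA k)) = 0 := by
  simp only [Fin.sum_univ_six, ev_1_0, ev_1_1, ev_1_2, ev_1_3, ev_1_4, ev_1_5, ev_4_0, ev_4_1, ev_4_2, ev_4_3, ev_4_4, ev_4_5, map_pow, ztconj]
  linear_combination ((1 : ℂ) + (-1 : ℂ) * zt ^ 4 + (1 : ℂ) * zt ^ 8 + (1 : ℂ) * zt ^ 16 + (-1 : ℂ) * zt ^ 20 + (1 : ℂ) * zt ^ 24 + (-1 : ℂ) * zt ^ 28 + (1 : ℂ) * zt ^ 32 + (1 : ℂ) * zt ^ 34 + (-1 : ℂ) * zt ^ 38 + (1 : ℂ) * zt ^ 42) * zt4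

lemma ortho_1_5 : ∑ k : Fin 6, chi (vB 1) (vA k) * (starRingEnd ℂ) (chi (vB 5) (vA k)) = 0 := by
  simp only [Fin.sum_univ_six, ev_1_0, ev_1_1, ev_1_2, ev_1_3, ev_1_4, ev_1_5, ev_5_0, ev_5_1, ev_5_2, ev_5_3, ev_5_4, ev_5_5, map_pow, ztconj]
  linear_combination ((1 : ℂ) + (-1 : ℂ) * zt ^ 4 + (1 : ℂ) * zt ^ 8 + (-1 : ℂ) * zt ^ 12 + (1 : ℂ) * zt ^ 16 + (1 : ℂ) * zt ^ 18 + (-1 : ℂ) * zt ^ 22 + (1 : ℂ) * zt ^ 26 + (1 : ℂ) * zt ^ 43) * zt4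

lemma ortho_2_0 : ∑ k : Fin 6, chi (vB 2) (vA k) * (starRingEnd ℂ) (chi (vB 0) (vA k)) = 0 := by
  simp only [Fin.sum_univ_six, ev_2_0, ev_2_1, ev_2_2, ev_2_3, ev_2_4, ev_2_5, ev_0_0, ev_0_1, ev_0_2, ev_0_3, ev_0_4, ev_0_5, map_pow, ztconj]
  linear_combination ((1 : ℂ) + (1 : ℂ) * zt ^ 2 + (1 : ℂ) * zt ^ 3) * zt4

lemma ortho_2_1 : ∑ k : Fin 6, chi (vB 2) (vA k) * (starRingEnd ℂ) (chi (vB 1) (vA k)) = 0 := by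
  simp only [Fin.sum_univ_six, ev_2_0, ev_2_1, ev_2_2, ev_2_3, ev_2_4, ev_2_5, ev_1_0, ev_1_1, ev_1_2, ev_1_3, ev_1_4, ev_1_5, map_pow, ztconj]
  linear_combination ((1 : ℂ) + (-1 : ℂ) * zt ^ 4 + (1 : ℂ) * zt ^ 8 + (1 : ℂ) * zt ^ 9 + (-1 : ℂ) * zt ^ 12 + (-1 : ℂ) * zt ^ 13 + (1 : ℂ) * zt ^ 16 + (1 : ℂ) * zt ^ 17 + (-1 : ℂ) * zt ^ 21 + (1 : ℂ) * zt ^ 25 + (-1 : ℂ) * zt ^ 29 + (1 : ℂ) * zt ^ 33 + (1 : ℂ) * zt ^ 35 + (-1 : ℂ) * zt ^ 37 + (1 : ℂ) * zt ^ 41) * zt4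

lemma ortho_2_3 : ∑ k : Fin 6, chi (vB 2) (vA k) * (starRingEnd ℂ) (chi (vB 3) (vA k)) = 0 := by
  simp only [Fin.sum_univ_six, ev_2_0, ev_2_1, ev_2_2, ev_2_3, ev_2_4, ev_2_5, ev_3_0, ev_3_1, ev_3_2, ev_3_3, ev_3_4, ev_3_5, map_pow, ztconj]
  linear_combination ((1 : ℂ) + (-1 : ℂ) * zt ^ 4 + (1 : ℂ) * zt ^ 8 + (-1 : ℂ) * zt ^ 12 + (1 : ℂ) * zt ^ 16 + (1 : ℂ) * zt ^ 18 + (-1 : ℂ) * zt ^ 20 + (-1 : ℂ) * zt ^ 22 + (1 : ℂ) * zt ^ 24 + (1 : ℂ) * zt ^ 26 + (1 : ℂ) * zt ^ 48) * zt4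

lemma ortho_2_4 : ∑ k : Fin 6, chi (vB 2) (vA k) * (starRingEnd ℂ) (chi (vB 4) (vA k)) = 0 := by
  simp only [Fin.sum_univ_six, ev_2_0, ev_2_1, ev_2_2, ev_2_3, ev_2_4, ev_2_5, ev_4_0, ev_4_1, ev_4_2, ev_4_3, ev_4_4, ev_4_5, map_pow, ztconj]
  linear_combination ((1 : ℂ) + (-1 : ℂ) * zt ^ 4 + (1 : ℂ) * zt ^ 8 + (1 : ℂ) * zt ^ 11 + (-1 : ℂ) * zt ^ 12 + (-1 : ℂ) * zt ^ 15 + (1 : ℂ) * zt ^ 16 + (1 : ℂ) * zt ^ 19 + (-1 : ℂ) * zt ^ 23 + (1 : ℂ) * zt ^ 27 + (1 : ℂ) * zt ^ 37 + (-1 : ℂ) * zt ^ 41 + (1 : ℂ) * zt ^ 45) * zt4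

lemma ortho_2_5 : ∑ k : Fin 6, chi (vB 2) (vA k) * (starRingEnd ℂ) (chi (vB 5) (vA k)) = 0 := by
  simp only [Fin.sum_univ_six, ev_2_0, ev_2_1, ev_2_2, ev_2_3, ev_2_4, ev_2_5, ev_5_0, ev_5_1, ev_5_2, ev_5_3, ev_5_4, ev_5_5, map_pow, ztconj]
  linear_combination ((1 : ℂ) + (-1 : ℂ) * zt ^ 4 + (1 : ℂ) * zt ^ 8 + (-1 : ℂ) * zt ^ 12 + (1 : ℂ) * zt ^ 16 + (1 : ℂ) * zt ^ 17 + (-1 : ℂ) * zt ^ 20 + (1 : ℂ) * zt ^ 24 + (-1 : ℂ) * zt ^ 28 + (1 : ℂ) * zt ^ 32 + (1 : ℂ) * zt ^ 34 + (-1 : ℂ) * zt ^ 36 + (-1 : ℂ) * zt ^ 38 + (1 : ℂ) * zt ^ 40 + (1 : ℂ) * zt ^ 42) * zt4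

lemma ortho_3_0 : ∑ k : Fin 6, chi (vB 3) (vA k) * (starRingEnd ℂ) (chi (vB 0) (vA k)) = 0 := by
  simp only [Fin.sum_univ_six, ev_3_0, ev_3_1, ev_3_2, ev_3_3, ev_3_4, ev_3_5, ev_0_0, ev_0_1, ev_0_2, ev_0_3, ev_0_4, ev_0_5, map_pow, ztconj]
  linear_combination ((1 : ℂ) + (1 : ℂ) * zt ^ 2 + (1 : ℂ) * zt ^ 3) * zt4

lemma ortho_3_1 : ∑ k : Fin 6, chi (vB 3) (vA k) * (starRingEnd ℂ) (chi (vB 1) (vA k)) = 0 := by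
  simp only [Fin.sum_univ_six, ev_3_0, ev_3_1, ev_3_2, ev_3_3, ev_3_4, ev_3_5, ev_1_0, ev_1_1, ev_1_2, ev_1_3, ev_1_4, ev_1_5, map_pow, ztconj]
  linear_combination ((1 : ℂ) + (-1 : ℂ) * zt ^ 4 + (1 : ℂ) * zt ^ 8 + (1 : ℂ) * zt ^ 11 + (-1 : ℂ) * zt ^ 12 + (-1 : ℂ) * zt ^ 15 + (1 : ℂ) * zt ^ 16 + (1 : ℂ) * zt ^ 19 + (-1 : ℂ) * zt ^ 23 + (1 : ℂ) * zt ^ 27 + (1 : ℂ) * zt ^ 37 + (-1 : ℂ) * zt ^ 41 + (1 : ℂ) * zt ^ 45) * zt4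

lemma ortho_3_2 : ∑ k : Fin 6, chi (vB 3) (vA k) * (starRingEnd ℂ) (chi (vB 2) (vA k)) = 0 := by
  simp only [Fin.sum_univ_six, ev_3_0, ev_3_1, ev_3_2, ev_3_3, ev_3_4, ev_3_5, ev_2_0, ev_2_1, ev_2_2, ev_2_3, ev_2_4, ev_2_5, map_pow, ztconj]
  linear_combination ((1 : ℂ) + (-1 : ℂ) * zt ^ 4 + (1 : ℂ) * zt ^ 8 + (-1 : ℂ) * zt ^ 12 + (1 : ℂ) * zt ^ 16 + (1 : ℂ) * zt ^ 18 + (-1 : ℂ) * zt ^ 20 + (-1 : ℂ) * zt ^ 22 + (1 : ℂ) * zt ^ 24 + (1 : ℂ) * zt ^ 26 + (1 : ℂ) * zt ^ 48) * zt4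

lemma ortho_3_4 : ∑ k : Fin 6, chi (vB 3) (vA k) * (starRingEnd ℂ) (chi (vB 4) (vA k)) = 0 := by
  simp only [Fin.sum_univ_six, ev_3_0, ev_3_1, ev_3_2, ev_3_3, ev_3_4, ev_3_5, ev_4_0, ev_4_1, ev_4_2, ev_4_3, ev_4_4, ev_4_5, map_pow, ztconj]
  linear_combination ((1 : ℂ) + (-1 : ℂ) * zt ^ 4 + (1 : ℂ) * zt ^ 8 + (1 : ℂ) * zt ^ 9 + (-1 : ℂ) * zt ^ 12 + (-1 : ℂ) * zt ^ 13 + (1 : ℂ) * zt ^ 16 + (1 : ℂ) * zt ^ 17 + (-1 : ℂ) * zt ^ 21 + (1 : ℂ) * zt ^ 25 + (-1 : ℂ) * zt ^ 29 + (1 : ℂ) * zt ^ 33 + (1 : ℂ) * zt ^ 35 + (-1 : ℂ) * zt ^ 37 + (1 : ℂ) * zt ^ 41) * zt4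

lemma ortho_3_5 : ∑ k : Fin 6, chi (vB 3) (vA k) * (starRingEnd ℂ) (chi (vB 5) (vA k)) = 0 := by
  simp only [Fin.sum_univ_six, ev_3_0, ev_3_1, ev_3_2, ev_3_3, ev_3_4, ev_3_5, ev_5_0, ev_5_1, ev_5_2, ev_5_3, ev_5_4, ev_5_5, map_pow, ztconj]
  linear_combination ((1 : ℂ) + (-1 : ℂ) * zt ^ 4 + (1 : ℂ) * zt ^ 8 + (-1 : ℂ) * zt ^ 12 + (1 : ℂ) * zt ^ 16 + (1 : ℂ) * zt ^ 17 + (-1 : ℂ) * zt ^ 20 + (1 : ℂ) * zt ^ 24 + (-1 : ℂ) * zt ^ 28 + (1 : ℂ) * zt ^ 32 + (1 : ℂ) * zt ^ 34 + (-1 : ℂ) * zt ^ 36 + (-1 : ℂ) * zt ^ 38 + (1 : ℂ) * zt ^ 40 + (1 : ℂ) * zt ^ 42) * zt4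

lemma ortho_4_0 : ∑ k : Fin 6, chi (vB 4) (vA k) * (starRingEnd ℂ) (chi (vB 0) (vA k)) = 0 := by
  simp only [Fin.sum_univ_six, ev_4_0, ev_4_1, ev_4_2, ev_4_3, ev_4_4, ev_4_5, ev_0_0, ev_0_1, ev_0_2, ev_0_3, ev_0_4, ev_0_5, map_pow, ztconj]
  linear_combination ((1 : ℂ) + (1 : ℂ) * zt ^ 1 + (1 : ℂ) * zt ^ 2) * zt4

lemma ortho_4_1 : ∑ k : Fin 6, chi (vB 4) (vA k) * (starRingEnd ℂ) (chi (vB 1) (vA k)) = 0 := by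
  simp only [Fin.sum_univ_six, ev_4_0, ev_4_1, ev_4_2, ev_4_3, ev_4_4, ev_4_5, ev_1_0, ev_1_1, ev_1_2, ev_1_3, ev_1_4, ev_1_5, map_pow, ztconj]
  linear_combination ((1 : ℂ) + (-1 : ℂ) * zt ^ 4 + (1 : ℂ) * zt ^ 8 + (1 : ℂ) * zt ^ 16 + (-1 : ℂ) * zt ^ 20 + (1 : ℂ) * zt ^ 24 + (-1 : ℂ) * zt ^ 28 + (1 : ℂ) * zt ^ 32 + (1 : ℂ) * zt ^ 34 + (-1 : ℂ) * zt ^ 38 + (1 : ℂ) * zt ^ 42) * zt4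

lemma ortho_4_2 : ∑ k : Fin 6, chi (vB 4) (vA k) * (starRingEnd ℂ) (chi (vB 2) (vA k)) = 0 := by
  simp only [Fin.sum_univ_six, ev_4_0, ev_4_1, ev_4_2, ev_4_3, ev_4_4, ev_4_5, ev_2_0, ev_2_1, ev_2_2, ev_2_3, ev_2_4, ev_2_5, map_pow, ztconj]
  linear_combination ((1 : ℂ) + (-1 : ℂ) * zt ^ 4 + (1 : ℂ) * zt ^ 8 + (-1 : ℂ) * zt ^ 12 + (1 : ℂ) * zt ^ 16 + (1 : ℂ) * zt ^ 19 + (-1 : ℂ) * zt ^ 20 + (-1 : ℂ) * zt ^ 23 + (1 : ℂ) * zt ^ 24 + (1 : ℂ) * zt ^ 25 + (1 : ℂ) * zt ^ 27 + (-1 : ℂ) * zt ^ 28 + (-1 : ℂ) * zt ^ 31 + (1 : ℂ) * zt ^ 32 + (1 : ℂ) * zt ^ 35 + (-1 : ℂ) * zt ^ 36 + (-1 : ℂ) * zt ^ 39 + (1 : ℂ) * zt ^ 40 + (1 : ℂ) * zt ^ 43 + (-1 : ℂ) * zt ^ 47 + (1 : ℂ) * zt ^ 51) * zt4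

lemma ortho_4_3 : ∑ k : Fin 6, chi (vB 4) (vA k) * (starRingEnd ℂ) (chi (vB 3) (vA k)) = 0 := by
  simp only [Fin.sum_univ_six, ev_4_0, ev_4_1, ev_4_2, ev_4_3, ev_4_4, ev_4_5, ev_3_0, ev_3_1, ev_3_2, ev_3_3, ev_3_4, ev_3_5, map_pow, ztconj]
  linear_combination ((1 : ℂ) + (-1 : ℂ) * zt ^ 4 + (1 : ℂ) * zt ^ 8 + (-1 : ℂ) * zt ^ 12 + (1 : ℂ) * zt ^ 15 + (1 : ℂ) * zt ^ 16 + (-1 : ℂ) * zt ^ 19 + (-1 : ℂ) * zt ^ 20 + (1 : ℂ) * zt ^ 23 + (1 : ℂ) * zt ^ 24 + (-1 : ℂ) * zt ^ 28 + (1 : ℂ) * zt ^ 32 + (1 : ℂ) * zt ^ 33 + (-1 : ℂ) * zt ^ 36 + (-1 : ℂ) * zt ^ 37 + (1 : ℂ) * zt ^ 40 + (1 : ℂ) * zt ^ 41 + (-1 : ℂ) * zt ^ 45 + (1 : ℂ) * zt ^ 49) * zt4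

lemma ortho_4_5 : ∑ k : Fin 6, chi (vB 4) (vA k) * (starRingEnd ℂ) (chi (vB 5) (vA k)) = 0 := by
  simp only [Fin.sum_univ_six, ev_4_0, ev_4_1, ev_4_2, ev_4_3, ev_4_4, ev_4_5, ev_5_0, ev_5_1, ev_5_2, ev_5_3, ev_5_4, ev_5_5, map_pow, ztconj]
  linear_combination ((1 : ℂ) + (-1 : ℂ) * zt ^ 4 + (1 : ℂ) * zt ^ 8 + (-1 : ℂ) * zt ^ 12 + (1 : ℂ) * zt ^ 16 + (1 : ℂ) * zt ^ 18 + (-1 : ℂ) * zt ^ 22 + (1 : ℂ) * zt ^ 26 + (1 : ℂ) * zt ^ 43) * zt4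

lemma ortho_5_0 : ∑ k : Fin 6, chi (vB 5) (vA k) * (starRingEnd ℂ) (chi (vB 0) (vA k)) = 0 := by
  simp only [Fin.sum_univ_six, ev_5_0, ev_5_1, ev_5_2, ev_5_3, ev_5_4, ev_5_5, ev_0_0, ev_0_1, ev_0_2, ev_0_3, ev_0_4, ev_0_5, map_pow, ztconj]
  linear_combination ((1 : ℂ) + (2 : ℂ) * zt ^ 2) * zt4

lemma ortho_5_1 : ∑ k : Fin 6, chi (vB 5) (vA k) * (starRingEnd ℂ) (chi (vB 1) (vA k)) = 0 := by
  simp only [Fin.sum_univ_six, ev_5_0, ev_5_1, ev_5_2, ev_5_3, ev_5_4, ev_5_5, ev_1_0, ev_1_1, ev_1_2, ev_1_3, ev_1_4, ev_1_5, map_pow, ztconj]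
  linear_combination ((1 : ℂ) + (-1 : ℂ) * zt ^ 4 + (1 : ℂ) * zt ^ 8 + (-1 : ℂ) * zt ^ 12 + (1 : ℂ) * zt ^ 13 + (1 : ℂ) * zt ^ 16 + (-1 : ℂ) * zt ^ 17 + (1 : ℂ) * zt ^ 18 + (-1 : ℂ) * zt ^ 20 + (1 : ℂ) * zt ^ 21 + (-1 : ℂ) * zt ^ 22 + (1 : ℂ) * zt ^ 24 + (-1 : ℂ) * zt ^ 25 + (1 : ℂ) * zt ^ 26 + (-1 : ℂ) * zt ^ 28 + (1 : ℂ) * zt ^ 29 + (1 : ℂ) * zt ^ 32 + (-1 : ℂ) * zt ^ 33 + (-1 : ℂ) * zt ^ 36 + (1 : ℂ) * zt ^ 37 + (1 : ℂ) * zt ^ 40) * zt4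

lemma ortho_5_2 : ∑ k : Fin 6, chi (vB 5) (vA k) * (starRingEnd ℂ) (chi (vB 2) (vA k)) = 0 := by
  simp only [Fin.sum_univ_six, ev_5_0, ev_5_1, ev_5_2, ev_5_3, ev_5_4, ev_5_5, ev_2_0, ev_2_1, ev_2_2, ev_2_3, ev_2_4, ev_2_5, map_pow, ztconj]
  linear_combination ((1 : ℂ) + (-1 : ℂ) * zt ^ 4 + (1 : ℂ) * zt ^ 8 + (-1 : ℂ) * zt ^ 12 + (1 : ℂ) * zt ^ 16 + (1 : ℂ) * zt ^ 23 + (-1 : ℂ) * zt ^ 27 + (1 : ℂ) * zt ^ 31 + (1 : ℂ) * zt ^ 34 + (-1 : ℂ) * zt ^ 35 + (-1 : ℂ) * zt ^ 38 + (1 : ℂ) * zt ^ 39 + (1 : ℂ) * zt ^ 42 + (-1 : ℂ) * zt ^ 43 + (1 : ℂ) * zt ^ 47) * zt4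

lemma ortho_5_3 : ∑ k : Fin 6, chi (vB 5) (vA k) * (starRingEnd ℂ) (chi (vB 3) (vA k)) = 0 := by
  simp only [Fin.sum_univ_six, ev_5_0, ev_5_1, ev_5_2, ev_5_3, ev_5_4, ev_5_5, ev_3_0, ev_3_1, ev_3_2, ev_3_3, ev_3_4, ev_3_5, map_pow, ztconj]
  linear_combination ((1 : ℂ) + (-1 : ℂ) * zt ^ 4 + (1 : ℂ) * zt ^ 8 + (-1 : ℂ) * zt ^ 12 + (1 : ℂ) * zt ^ 16 + (1 : ℂ) * zt ^ 23 + (-1 : ℂ) * zt ^ 27 + (1 : ℂ) * zt ^ 31 + (1 : ℂ) * zt ^ 34 + (-1 : ℂ) * zt ^ 35 + (-1 : ℂ) * zt ^ 38 + (1 : ℂ) * zt ^ 39 + (1 : ℂ) * zt ^ 42 + (-1 : ℂ) * zt ^ 43 + (1 : ℂ) * zt ^ 47) * zt4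

lemma ortho_5_4 : ∑ k : Fin 6, chi (vB 5) (vA k) * (starRingEnd ℂ) (chi (vB 4) (vA k)) = 0 := by
  simp only [Fin.sum_univ_six, ev_5_0, ev_5_1, ev_5_2, ev_5_3, ev_5_4, ev_5_5, ev_4_0, ev_4_1, ev_4_2, ev_4_3, ev_4_4, ev_4_5, map_pow, ztconj]
  linear_combination ((1 : ℂ) + (-1 : ℂ) * zt ^ 4 + (1 : ℂ) * zt ^ 8 + (-1 : ℂ) * zt ^ 12 + (1 : ℂ) * zt ^ 13 + (1 : ℂ) * zt ^ 16 + (-1 : ℂ) * zt ^ 17 + (1 : ℂ) * zt ^ 18 + (-1 : ℂ) * zt ^ 20 + (1 : ℂ) * zt ^ 21 + (-1 : ℂ) * zt ^ 22 + (1 : ℂ) * zt ^ 24 + (-1 : ℂ) * zt ^ 25 + (1 : ℂ) * zt ^ 26 + (-1 : ℂ) * zt ^ 28 + (1 : ℂ) * zt ^ 29 + (1 : ℂ) * zt ^ 32 + (-1 : ℂ) * zt ^ 33 + (-1 : ℂ) * zt ^ 36 + (1 : ℂ) * zt ^ 37 + (1 : ℂ) * zt ^ 40) * zt4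

lemma ortho_all (i j : Fin 6) (hne : chi (vB i) ≠ chi (vB j)) :
    ∑ k : Fin 6, chi (vB i) (vA k) * (starRingEnd ℂ) (chi (vB j) (vA k)) = 0 := by
  fin_cases i <;> fin_cases j
  · exact (hne rfl).elim
  · exact ortho_0_1
  · exact ortho_0_2
  · exact ortho_0_3
  · exact ortho_0_4
  · exact ortho_0_5
  · exact ortho_1_0
  · exact (hne rfl).elim
  · exact ortho_1_2
  · exact ortho_1_3
  · exact ortho_1_4
  · exact ortho_1_5
  · exact ortho_2_0
  · exact ortho_2_1
  · exact (hne rfl).elim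
  · exact ortho_2_3
  · exact ortho_2_4
  · exact ortho_2_5
  · exact ortho_3_0
  · exact ortho_3_1
  · exact ortho_3_2
  · exact (hne rfl).elim
  · exact ortho_3_4
  · exact ortho_3_5
  · exact ortho_4_0
  · exact ortho_4_1
  · exact ortho_4_2
  · exact ortho_4_3
  · exact (hne rfl).elim
  · exact ortho_4_5
  · exact ortho_5_0
  · exact ortho_5_1
  · exact ortho_5_2
  · exact ortho_5_3
  · exact ortho_5_4
  · exact (hne rfl).elim

/-- There is a 6-element subset of `(ℤ/8ℤ)^3` which is spectral but does not tile. -/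
theorem exists_spectral_non_tile_Z8cubed :
    ∃ A : Finset (Fin 3 → ZMod 8), A.card = 6 ∧ IsSpectral A ∧ ¬ Tiles A := by
  refine ⟨Finset.image vA Finset.univ, ?_, ?_, ?_⟩
  · rw [Finset.card_image_of_injective _ vA_inj, Finset.card_univ, Fintype.card_fin]
  · refine ⟨Finset.image (fun i => chi (vB i)) Finset.univ, ?_, ?_⟩
    · rw [Finset.card_image_of_injective _ (fun x y h => vB_inj (chi_inj h)),
        Finset.card_image_of_injective _ vA_inj]
    · intro χ hχ ψ hψ hne
      obtain ⟨i, -, rfl⟩ := Finset.mem_image.mp hχ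
      obtain ⟨j, -, rfl⟩ := Finset.mem_image.mp hψ
      rw [Finset.sum_image (fun x _ y _ h => vA_inj h)]
      exact ortho_all i j hne
  · rintro ⟨T, hT⟩
    have himage : Finset.image (fun p : (Fin 3 → ZMod 8) × (Fin 3 → ZMod 8) => p.1 + p.2)
        ((Finset.image vA Finset.univ) ×ˢ T) = Finset.univ := by
      apply Finset.eq_univ_of_forall
      intro g
      rw [Finset.mem_image]
      obtain ⟨p, ⟨hp1, hp2, hp3⟩, -⟩ := hT g
      exact ⟨p, Finset.mem_product.mpr ⟨hp1, hp2⟩, hp3⟩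
    have hinj : Set.InjOn (fun p : (Fin 3 → ZMod 8) × (Fin 3 → ZMod 8) => p.1 + p.2)
        (((Finset.image vA Finset.univ) ×ˢ T : Finset _) : Set _) := by
      intro p hp q hq hpq
      rw [Finset.mem_coe, Finset.mem_product] at hp hq
      obtain ⟨r, -, hr⟩ := hT (p.1 + p.2)
      rw [hr p ⟨hp.1, hp.2, rfl⟩, hr q ⟨hq.1, hq.2, hpq.symm⟩]
    have hcard := Finset.card_image_of_injOn hinj
    rw [himage, Finset.card_univ, Finset.card_product,
      Finset.card_image_of_injective _ vA_inj, Finset.card_univ, Fintype.card_fin] at hcard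
    have h512 : Fintype.card (Fin 3 → ZMod 8) = 512 := by
      rw [Fintype.card_fun]; simp
    rw [h512] at hcard
    omega
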